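/- Let F and G be disjoint finite sets of integers and let u' : ℝ → F → ℂ be a differentiable solution of the t-model equations for the Fourier-truncated 1D critical focusing NLS (as in the mass dissipation identity: for every k ∈ F, d u'_k/dt = −i k² u'_k + i Σ_{k₁−k₂+k₃−k₄+k₅=k, all kᵢ∈F} u'_{k₁} conj(u'_{k₂}) u'_{k₃} conj(u'_{k₄}) u'_{k₅} + t·[ 3i Σ_{k₁∈G, k₂,…,k₅∈F, k₁−k₂+k₃−k₄+k₅=k} R_{k₁}(u') conj(u'_{k₂}) u'_{k₃} conj(u'_{k₄}) u'_{k₅} + 2i Σ_{k₂∈G, k₁,k₃,k₄,k₅∈F, k₁−k₂+k₃−k₄+k₅=k} u'_{k₁} conj(R_{k₂}(u')) u'_{k₃} conj(u'_{k₄}) u'_{k₅} ], where for m ∈ G, R_m(v) = i Σ_{k₁−k₂+k₃−k₄+k₅=m, all kᵢ∈F} v_{k₁} conj(v_{k₂}) v_{k₃} conj(v_{k₄}) v_{k₅}). Then the resolved mass M_F(t) = Σ_{k∈F} |u'_k(t)|² is non-increasing on [0, ∞): for all 0 ≤ t₁ ≤ t₂, M_F(t₂) ≤ M_F(t₁). 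-/

import Mathlib

open Finset

/-- The set of 5-tuples `(k₁,k₂,k₃,k₄,k₅) ∈ A × B × C × D × E` with
`k₁ - k₂ + k₃ - k₄ + k₅ = k`. -/
def mixedQuintuples (A B C D E : Finset ℤ) (k : ℤ) : Finset (ℤ × ℤ × ℤ × ℤ × ℤ) :=
  (A ×ˢ B ×ˢ C ×ˢ D ×ˢ E).filter
    (fun p => p.1 - p.2.1 + p.2.2.1 - p.2.2.2.1 + p.2.2.2.2 = k)

/-- sum-exchange -/
lemma sum_mixed (A B C D E K : Finset ℤ) (g : ℤ → (ℤ×ℤ×ℤ×ℤ×ℤ) → ℂ) :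
    ∑ k ∈ K, ∑ p ∈ mixedQuintuples A B C D E k, g k p
    = ∑ q ∈ (K ×ˢ A ×ˢ B ×ˢ C ×ˢ D ×ˢ E).filter
        (fun q => q.2.1 - q.2.2.1 + q.2.2.2.1 - q.2.2.2.2.1 + q.2.2.2.2.2 = q.1), g q.1 q.2 := by
  rw [Finset.sum_filter, Finset.sum_product]
  refine Finset.sum_congr rfl fun k hk => ?_
  rw [mixedQuintuples, Finset.sum_filter]

noncomputable def qterm (w : ℤ → ℂ) (p : ℤ×ℤ×ℤ×ℤ×ℤ) : ℂ :=
  w p.1 * (starRingEnd ℂ) (w p.2.1) * w p.2.2.1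
    * (starRingEnd ℂ) (w p.2.2.2.1) * w p.2.2.2.2

noncomputable def Squint (F : Finset ℤ) (w : ℤ → ℂ) (m : ℤ) : ℂ :=
  ∑ p ∈ mixedQuintuples F F F F F m, qterm w p

lemma lemB (F : Finset ℤ) (w : ℤ → ℂ) :
    (starRingEnd ℂ) (∑ k ∈ F, (starRingEnd ℂ) (w k) * Squint F w k)
      = ∑ k ∈ F, (starRingEnd ℂ) (w k) * Squint F w k := by
  simp only [Squint, Finset.mul_sum]
  rw [sum_mixed F F F F F F (fun k p => (starRingEnd ℂ) (w k) * qterm w p), map_sum]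
  refine Finset.sum_nbij'
    (fun q => (q.2.2.2.2.2, (q.2.2.1, q.2.1, q.2.2.2.2.1, q.2.2.2.1, q.1)))
    (fun q => (q.2.2.2.2.2, (q.2.2.1, q.2.1, q.2.2.2.2.1, q.2.2.2.1, q.1)))
    ?_ ?_ ?_ ?_ ?_
  · intro q hq
    simp only [Finset.mem_filter, Finset.mem_product] at hq ⊢
    obtain ⟨⟨h1,h2,h3,h4,h5,h6⟩, hc⟩ := hq
    exact ⟨⟨h6,h3,h2,h5,h4,h1⟩, by omega⟩
  · intro q hq
    simp only [Finset.mem_filter, Finset.mem_product] at hq ⊢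
    obtain ⟨⟨h1,h2,h3,h4,h5,h6⟩, hc⟩ := hq
    exact ⟨⟨h6,h3,h2,h5,h4,h1⟩, by omega⟩
  · intro q hq; rfl
  · intro q hq; rfl
  · intro q hq
    simp only [qterm, map_mul, Complex.conj_conj]
    ring

lemma lemC (F G : Finset ℤ) (w R : ℤ → ℂ) :
    ∑ k ∈ F, (starRingEnd ℂ) (w k) *
        ∑ p ∈ mixedQuintuples G F F F F k,
          R p.1 * (starRingEnd ℂ) (w p.2.1) * w p.2.2.1
            * (starRingEnd ℂ) (w p.2.2.2.1) * w p.2.2.2.2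
    = ∑ m ∈ G, R m * (starRingEnd ℂ) (Squint F w m) := by
  simp only [Squint, map_sum, Finset.mul_sum]
  rw [sum_mixed G F F F F F (fun k p => (starRingEnd ℂ) (w k) *
      (R p.1 * (starRingEnd ℂ) (w p.2.1) * w p.2.2.1
        * (starRingEnd ℂ) (w p.2.2.2.1) * w p.2.2.2.2)),
    sum_mixed F F F F F G (fun m p => R m * (starRingEnd ℂ) (qterm w p))]
  refine Finset.sum_nbij'
    (fun q => (q.2.1, (q.2.2.1, q.2.2.2.1, q.2.2.2.2.1, q.2.2.2.2.2, q.1)))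
    (fun q => (q.2.2.2.2.2, (q.1, q.2.1, q.2.2.1, q.2.2.2.1, q.2.2.2.2.1)))
    ?_ ?_ ?_ ?_ ?_
  · intro q hq
    simp only [Finset.mem_filter, Finset.mem_product] at hq ⊢
    obtain ⟨⟨h1,h2,h3,h4,h5,h6⟩, hc⟩ := hq
    exact ⟨⟨h2,h3,h4,h5,h6,h1⟩, by omega⟩
  · intro q hq
    simp only [Finset.mem_filter, Finset.mem_product] at hq ⊢
    obtain ⟨⟨h1,h2,h3,h4,h5,h6⟩, hc⟩ := hq
    exact ⟨⟨h6,h1,h2,h3,h4,h5⟩, by omega⟩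
  · intro q hq; rfl
  · intro q hq; rfl
  · intro q hq
    simp only [qterm, map_mul, Complex.conj_conj]
    ring

lemma lemD (F G : Finset ℤ) (w R : ℤ → ℂ) :
    ∑ k ∈ F, (starRingEnd ℂ) (w k) *
        ∑ p ∈ mixedQuintuples F G F F F k,
          w p.1 * (starRingEnd ℂ) (R p.2.1) * w p.2.2.1
            * (starRingEnd ℂ) (w p.2.2.2.1) * w p.2.2.2.2
    = ∑ m ∈ G, (starRingEnd ℂ) (R m) * Squint F w m := by
  simp only [Squint, Finset.mul_sum]
  rw [sum_mixed F G F F F F (fun k p => (starRingEnd ℂ) (w k) *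
      (w p.1 * (starRingEnd ℂ) (R p.2.1) * w p.2.2.1
        * (starRingEnd ℂ) (w p.2.2.2.1) * w p.2.2.2.2)),
    sum_mixed F F F F F G (fun m p => (starRingEnd ℂ) (R m) * qterm w p)]
  refine Finset.sum_nbij'
    (fun q => (q.2.2.1, (q.2.1, q.2.2.2.2.1, q.2.2.2.1, q.1, q.2.2.2.2.2)))
    (fun q => (q.2.2.2.2.1, (q.2.1, q.1, q.2.2.2.1, q.2.2.1, q.2.2.2.2.2)))
    ?_ ?_ ?_ ?_ ?_
  · intro q hq
    simp only [Finset.mem_filter, Finset.mem_product] at hq ⊢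
    obtain ⟨⟨h1,h2,h3,h4,h5,h6⟩, hc⟩ := hq
    exact ⟨⟨h3,h2,h5,h4,h1,h6⟩, by omega⟩
  · intro q hq
    simp only [Finset.mem_filter, Finset.mem_product] at hq ⊢
    obtain ⟨⟨h1,h2,h3,h4,h5,h6⟩, hc⟩ := hq
    exact ⟨⟨h5,h2,h1,h4,h3,h6⟩, by omega⟩
  · intro q hq; rfl
  · intro q hq; rfl
  · intro q hq
    simp only [qterm, map_mul, Complex.conj_conj]
    ring

/-- The truncated right-hand side of the Fourier-Galerkin 1D critical focusing NLS:
`R_m(v) = -i m² v_m · 1_{m ∈ F} + i Σ_{k₁-k₂+k₃-k₄+k₅ = m, kᵢ ∈ F}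
v_{k₁} conj(v_{k₂}) v_{k₃} conj(v_{k₄}) v_{k₅}`. -/
noncomputable def truncRHS (F : Finset ℤ) (v : ℤ → ℂ) (m : ℤ) : ℂ :=
  (if m ∈ F then -Complex.I * (m : ℂ) ^ 2 * v m else 0)
    + Complex.I * ∑ p ∈ mixedQuintuples F F F F F m,
        v p.1 * (starRingEnd ℂ) (v p.2.1) * v p.2.2.1
          * (starRingEnd ℂ) (v p.2.2.2.1) * v p.2.2.2.2

/-- The right-hand side of the `t`-model equation for a resolved mode `k ∈ F`. -/
noncomputable def tModelRHS (F G : Finset ℤ) (v : ℤ → ℂ) (t : ℝ) (k : ℤ) : ℂ :=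
  -Complex.I * (k : ℂ) ^ 2 * v k
    + Complex.I * ∑ p ∈ mixedQuintuples F F F F F k,
        v p.1 * (starRingEnd ℂ) (v p.2.1) * v p.2.2.1
          * (starRingEnd ℂ) (v p.2.2.2.1) * v p.2.2.2.2
    + (t : ℂ) *
      (3 * Complex.I * ∑ p ∈ mixedQuintuples G F F F F k,
          truncRHS F v p.1 * (starRingEnd ℂ) (v p.2.1) * v p.2.2.1
            * (starRingEnd ℂ) (v p.2.2.2.1) * v p.2.2.2.2
        + 2 * Complex.I * ∑ p ∈ mixedQuintuples F G F F F k,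
            v p.1 * (starRingEnd ℂ) (truncRHS F v p.2.1) * v p.2.2.1
              * (starRingEnd ℂ) (v p.2.2.2.1) * v p.2.2.2.2)

lemma truncRHS_of_G {F G : Finset ℤ} (hdisj : Disjoint F G) (w : ℤ → ℂ) {m : ℤ}
    (hm : m ∈ G) : truncRHS F w m = Complex.I * Squint F w m := by
  have : m ∉ F := fun h => (Finset.disjoint_left.mp hdisj h) hm
  simp [truncRHS, Squint, qterm, this]

lemma key_re (F G : Finset ℤ) (hdisj : Disjoint F G) (w : ℤ → ℂ) (t : ℝ) :
    (∑ k ∈ F, (starRingEnd ℂ) (w k) * tModelRHS F G w t k).re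
      = -t * ∑ m ∈ G, Complex.normSq (Squint F w m) := by
  have hpt : ∀ k ∈ F, (starRingEnd ℂ) (w k) * tModelRHS F G w t k
      = (starRingEnd ℂ) (w k) * (-Complex.I * (k:ℂ)^2 * w k)
        + Complex.I * ((starRingEnd ℂ) (w k) * Squint F w k)
        + (t : ℂ) * (3 * Complex.I *
            ((starRingEnd ℂ) (w k) *
              ∑ p ∈ mixedQuintuples G F F F F k,
                truncRHS F w p.1 * (starRingEnd ℂ) (w p.2.1) * w p.2.2.1
                  * (starRingEnd ℂ) (w p.2.2.2.1) * w p.2.2.2.2)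
          + 2 * Complex.I *
            ((starRingEnd ℂ) (w k) *
              ∑ p ∈ mixedQuintuples F G F F F k,
                w p.1 * (starRingEnd ℂ) (truncRHS F w p.2.1) * w p.2.2.1
                  * (starRingEnd ℂ) (w p.2.2.2.1) * w p.2.2.2.2)) := by
    intro k _
    simp only [tModelRHS, Squint, qterm]
    ring
  rw [Finset.sum_congr rfl hpt]
  simp only [Finset.sum_add_distrib, ← Finset.mul_sum]
  rw [lemC F G w (truncRHS F w), lemD F G w (truncRHS F w)]
  have h3 : ∑ m ∈ G, truncRHS F w m * (starRingEnd ℂ) (Squint F w m)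
      = Complex.I * ∑ m ∈ G, (Complex.normSq (Squint F w m) : ℂ) := by
    rw [Finset.mul_sum]
    refine Finset.sum_congr rfl fun m hm => ?_
    rw [truncRHS_of_G hdisj w hm, mul_assoc, Complex.mul_conj]
  have h4 : ∑ m ∈ G, (starRingEnd ℂ) (truncRHS F w m) * Squint F w m
      = -Complex.I * ∑ m ∈ G, (Complex.normSq (Squint F w m) : ℂ) := by
    rw [Finset.mul_sum]
    refine Finset.sum_congr rfl fun m hm => ?_
    rw [truncRHS_of_G hdisj w hm, map_mul, Complex.conj_I, mul_assoc,
      mul_comm ((starRingEnd ℂ) (Squint F w m)), Complex.mul_conj]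
  rw [h3, h4]
  have hTim : (∑ k ∈ F, (starRingEnd ℂ) (w k) * Squint F w k).im = 0 :=
    Complex.conj_eq_iff_im.mp (lemB F w)
  have hN : ∑ m ∈ G, (Complex.normSq (Squint F w m) : ℂ)
      = ((∑ m ∈ G, Complex.normSq (Squint F w m) : ℝ) : ℂ) := by push_cast; ring
  rw [hN]
  have hA : (∑ k ∈ F, (starRingEnd ℂ) (w k) * (-Complex.I * (k:ℂ)^2 * w k)).re = 0 := by
    rw [Complex.re_sum]
    refine Finset.sum_eq_zero fun k _ => ?_
    simp only [pow_two, Complex.mul_re, Complex.mul_im, Complex.intCast_im,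
      Complex.intCast_re, Complex.conj_re, Complex.conj_im, Complex.neg_re,
      Complex.neg_im, Complex.I_re, Complex.I_im]
    ring
  set N : ℝ := ∑ m ∈ G, Complex.normSq (Squint F w m) with hNdef
  have hcomb : 3 * Complex.I * (Complex.I * (N:ℂ)) + 2 * Complex.I * (-Complex.I * (N:ℂ))
      = -(N:ℂ) := by
    linear_combination (N:ℂ) * Complex.I_mul_I
  rw [hcomb]
  rw [Complex.add_re, Complex.add_re, hA, Complex.mul_re, Complex.mul_re, hTim]
  simp

lemma hasDerivAt_abs_sq {f : ℝ → ℂ} {f' : ℂ} {t : ℝ} (h : HasDerivAt f f' t) :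
    HasDerivAt (fun s => ‖f s‖ ^ 2)
      (2 * ((starRingEnd ℂ) (f t) * f').re) t := by
  have hre : HasDerivAt (fun s => (f s).re) f'.re t :=
    Complex.reCLM.hasFDerivAt.comp_hasDerivAt t h
  have him : HasDerivAt (fun s => (f s).im) f'.im t :=
    Complex.imCLM.hasFDerivAt.comp_hasDerivAt t h
  have key := (hre.mul hre).add (him.mul him)
  have hfun : (fun s => ‖f s‖ ^ 2)
      = fun s => (f s).re * (f s).re + (f s).im * (f s).im := by
    funext s; rw [Complex.sq_norm, Complex.normSq_apply]
  rw [hfun]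
  refine key.congr_deriv ?_
  simp [Complex.mul_re]
  ring

/-- The resolved mass `M_F(t) = Σ_{k ∈ F} |u'_k(t)|²` of a solution of the `t`-model
for the Fourier-truncated 1D critical focusing NLS is non-increasing on `[0, ∞)`. -/
theorem tmodel_mass_nonincreasing
    (F G : Finset ℤ) (hdisj : Disjoint F G) (u' : ℝ → ℤ → ℂ)
    (hode : ∀ k ∈ F, ∀ t : ℝ,
      HasDerivAt (fun s => u' s k) (tModelRHS F G (u' t) t k) t) :
    ∀ t₁ t₂ : ℝ, 0 ≤ t₁ → t₁ ≤ t₂ →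
      (∑ k ∈ F, ‖u' t₂ k‖ ^ 2) ≤ ∑ k ∈ F, ‖u' t₁ k‖ ^ 2 := by
  have hM : ∀ x : ℝ, HasDerivAt (fun s => ∑ k ∈ F, ‖u' s k‖ ^ 2)
      (2 * (∑ k ∈ F, (starRingEnd ℂ) (u' x k) * tModelRHS F G (u' x) x k).re) x := by
    intro x
    have h := HasDerivAt.fun_sum (fun k hk => hasDerivAt_abs_sq (hode k hk x))
    rw [Complex.re_sum, Finset.mul_sum]
    exact h
  intro t₁ t₂ h1 h12
  have anti : AntitoneOn (fun s => ∑ k ∈ F, ‖u' s k‖ ^ 2) (Set.Ici (0:ℝ)) := by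
    apply antitoneOn_of_deriv_nonpos (convex_Ici 0)
    · exact fun x _ => (hM x).continuousAt.continuousWithinAt
    · exact fun x _ => (hM x).differentiableAt.differentiableWithinAt
    · intro x hx
      rw [(hM x).deriv, key_re F G hdisj (u' x) x]
      have hxpos : 0 < x := by simpa using hx
      have hnn : 0 ≤ ∑ m ∈ G, Complex.normSq (Squint F (u' x) m) :=
        Finset.sum_nonneg fun m _ => Complex.normSq_nonneg _
      nlinarith
  exact anti (Set.mem_Ici.mpr h1) (Set.mem_Ici.mpr (h1.trans h12)) h12
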